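/- Set λ := 1 + √(L^x/μ^x) + √(L^y/μ^y) + Λ^xx/μ^x + Λ^xy/√(μ^x μ^y) + Λ^yy/μ^y, and suppose F has a saddle point (x⋆, y⋆). Then the iterates of the explicit extragradient recursion satisfy, for every t ≥ 0: μ^x V_{z^x_t}(x⋆) + μ^y V_{z^y_t}(y⋆) + V^f_{x⋆}(z^f_t) + V^g_{y⋆}(z^g_t) ≤ (λ/(1+λ))^t · (μ^x V_{z^x_0}(x⋆) + μ^y V_{z^y_0}(y⋆) + V^f_{x⋆}(z^f_0) + V^g_{y⋆}(z^g_0)). -/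

import Mathlib

open scoped RealInnerProductSpace

/-- Bregman divergence `V^φ_u(v) = φ(v) - φ(u) - ⟪∇φ(u), v - u⟫`, with explicit gradient `φ'`. -/
noncomputable def breg {X : Type*} [NormedAddCommGroup X] [InnerProductSpace ℝ X]
    (φ : X → ℝ) (φ' : X → X) (u v : X) : ℝ :=
  φ v - φ u - ⟪φ' u, v - u⟫

set_option linter.unusedSectionVars false
section Aux
variable {E : Type*} [NormedAddCommGroup E] [InnerProductSpace ℝ E] [CompleteSpace E]

lemma three_point (a b c : E) :
    ⟪a - b, b - c⟫ = 1/2*‖a-c‖^2 - 1/2*‖b-c‖^2 - 1/2*‖a-b‖^2 := by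
  have h : ‖a - c‖ ^ 2 = ‖(a-b)+(b-c)‖ ^ 2 := by rw [sub_add_sub_cancel]
  rw [norm_add_sq_real] at h
  linarith

lemma hasDerivAt_line (f : E → ℝ) (f' : E → E) (hfd : ∀ x, HasGradientAt f (f' x) x)
    (x d : E) (t : ℝ) :
    HasDerivAt (fun s : ℝ => f (x + s • d)) ⟪f' (x + t • d), d⟫ t := by
  have hline : HasDerivAt (fun s : ℝ => x + s • d) d t := by
    simpa using ((hasDerivAt_id t).smul_const d).const_add x
  have h2 := (hfd (x + t • d)).hasFDerivAt.comp_hasDerivAt t hline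
  simpa [InnerProductSpace.toDual_apply_apply, Function.comp_def] using h2

lemma grad_ineq (f : E → ℝ) (f' : E → E) (hconv : ConvexOn ℝ Set.univ f)
    (hfd : ∀ x, HasGradientAt f (f' x) x) (x y : E) :
    f x + ⟪f' x, y - x⟫ ≤ f y := by
  set φ : ℝ → ℝ := fun t => f (x + t • (y - x)) with hφ
  have hφconv : ConvexOn ℝ Set.univ φ := by
    have h1 := hconv.comp_affineMap (AffineMap.lineMap (k := ℝ) x y)
    have : (Set.univ : Set ℝ) = (AffineMap.lineMap (k := ℝ) x y) ⁻¹' Set.univ := by simp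
    rw [this]
    suffices e : φ = f ∘ AffineMap.lineMap (k := ℝ) x y by rw [e]; exact h1
    funext t
    simp [φ, AffineMap.lineMap_apply, add_comm]
  have hd0 : HasDerivAt φ ⟪f' x, y - x⟫ 0 := by
    simpa using hasDerivAt_line f f' hfd x (y - x) 0
  have hs := hφconv.le_slope_of_hasDerivAt (Set.mem_univ (0:ℝ)) (Set.mem_univ (1:ℝ))
    one_pos hd0
  have h0 : φ 0 = f x := by simp [φ]
  have h1 : φ 1 = f y := by simp [φ]
  rw [slope_def_field] at hs
  simp [h0, h1, div_one] at hs
  · linarith [hs]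

lemma descent (f : E → ℝ) (f' : E → E) (hfd : ∀ x, HasGradientAt f (f' x) x)
    (L : ℝ) (hL : 0 ≤ L) (hsm : ∀ a b : E, ‖f' a - f' b‖ ≤ L * ‖a - b‖) (x y : E) :
    f y ≤ f x + ⟪f' x, y - x⟫ + L / 2 * ‖y - x‖ ^ 2 := by
  set d := y - x with hd
  have hf'cont : Continuous f' := by
    have h : LipschitzWith (Real.toNNReal L) f' := by
      apply LipschitzWith.of_dist_le_mul
      intro a b
      rw [dist_eq_norm, dist_eq_norm]
      calc ‖f' a - f' b‖ ≤ L * ‖a - b‖ := hsm a b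
        _ ≤ _ := by rw [Real.coe_toNNReal L hL]
    exact h.continuous
  set φ' : ℝ → ℝ := fun t => ⟪f' (x + t • d), d⟫ with hφ'
  have hφ'cont : Continuous φ' := by
    apply Continuous.inner
    · exact hf'cont.comp (by continuity)
    · exact continuous_const
  have hder : ∀ t ∈ Set.uIcc (0:ℝ) 1, HasDerivAt (fun s => f (x + s • d)) (φ' t) t :=
    fun t _ => hasDerivAt_line f f' hfd x d t
  have hftc : ∫ t in (0:ℝ)..1, φ' t = f (x + (1:ℝ) • d) - f (x + (0:ℝ) • d) :=
    intervalIntegral.integral_eq_sub_of_hasDerivAt hder (hφ'cont.intervalIntegrable 0 1)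
  have hmono : ∫ t in (0:ℝ)..1, φ' t ≤ ∫ t in (0:ℝ)..1, (⟪f' x, d⟫ + (L*‖d‖^2)*t) := by
    apply intervalIntegral.integral_mono_on (by norm_num)
      (hφ'cont.intervalIntegrable 0 1) (((by fun_prop : Continuous
        (fun t : ℝ => ⟪f' x, d⟫ + (L*‖d‖^2)*t))).intervalIntegrable 0 1)
    intro t ht
    have hsplit : φ' t - ⟪f' x, d⟫ = ⟪f' (x + t • d) - f' x, d⟫ := by
      rw [inner_sub_left]
    have hb : ⟪f' (x + t • d) - f' x, d⟫ ≤ ‖f' (x + t • d) - f' x‖ * ‖d‖ :=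
      real_inner_le_norm _ _
    have hl : ‖f' (x + t • d) - f' x‖ ≤ L * (t * ‖d‖) := by
      have h1 : ‖f' (x + t • d) - f' x‖ ≤ L * ‖t • d‖ := by simpa using hsm (x + t • d) x
      rwa [norm_smul, Real.norm_eq_abs, abs_of_nonneg ht.1] at h1
    have hdn : (0:ℝ) ≤ ‖d‖ := norm_nonneg d
    have hint2 := mul_le_mul_of_nonneg_right hl hdn
    have heq : L * (t * ‖d‖) * ‖d‖ = (L*‖d‖^2)*t := by ring
    rw [heq] at hint2
    linarith [hsplit, hb, hint2]
  have hint : ∫ t in (0:ℝ)..1, (⟪f' x, d⟫ + (L*‖d‖^2)*t) = ⟪f' x, d⟫ + (L*‖d‖^2)/2 := by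
    rw [intervalIntegral.integral_add (intervalIntegrable_const)
      (((by fun_prop : Continuous (fun t : ℝ => (L*‖d‖^2)*t))).intervalIntegrable 0 1)]
    have h2 : ∫ t in (0:ℝ)..1, (L*‖d‖^2)*t = (L*‖d‖^2)/2 := by
      rw [intervalIntegral.integral_const_mul]
      simp
      ring
    rw [h2]
    simp
  have h1 : x + (1:ℝ) • d = y := by rw [one_smul, hd]; abel
  have h0 : x + (0:ℝ) • d = x := by simp
  rw [h1, h0] at hftc
  rw [hint] at hmono
  rw [hftc] at hmono
  linarith

lemma coco (f : E → ℝ) (f' : E → E) (hconv : ConvexOn ℝ Set.univ f)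
    (hfd : ∀ x, HasGradientAt f (f' x) x)
    (L : ℝ) (hL : 0 ≤ L) (hsm : ∀ a b : E, ‖f' a - f' b‖ ≤ L * ‖a - b‖) (u v : E) :
    ‖f' u - f' v‖ ^ 2 ≤ 2 * L * (f u - f v - ⟪f' v, u - v⟫) := by
  have hD : 0 ≤ f u - f v - ⟪f' v, u - v⟫ := by
    have := grad_ineq f f' hconv hfd v u
    linarith
  rcases eq_or_lt_of_le hL with hL0 | hLpos
  · have h1 : ‖f' u - f' v‖ ≤ 0 := by simpa [← hL0] using hsm u v
    have h0 : ‖f' u - f' v‖ = 0 := le_antisymm h1 (norm_nonneg _)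
    rw [h0, ← hL0]
    norm_num
  · set Δ := f' u - f' v with hΔ
    set w := u - (L⁻¹) • Δ with hw
    have h1 : f v + ⟪f' v, w - v⟫ ≤ f w := grad_ineq f f' hconv hfd v w
    have h2 : f w ≤ f u + ⟪f' u, w - u⟫ + L / 2 * ‖w - u‖ ^ 2 :=
      descent f f' hfd L hL hsm u w
    have hwu : w - u = -(L⁻¹ • Δ) := by rw [hw]; abel
    have hnwu : ‖w - u‖ ^ 2 = L⁻¹^2 * ‖Δ‖^2 := by
      rw [hwu, norm_neg, norm_smul, Real.norm_eq_abs, abs_of_pos (inv_pos.2 hLpos)]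
      ring
    have hiu : ⟪f' u, w - u⟫ = -(L⁻¹ * ⟪f' u, Δ⟫) := by
      rw [hwu, inner_neg_right, real_inner_smul_right]
    have hwv : w - v = (u - v) - L⁻¹ • Δ := by rw [hw]; abel
    have hiv : ⟪f' v, w - v⟫ = ⟪f' v, u - v⟫ - L⁻¹ * ⟪f' v, Δ⟫ := by
      rw [hwv, inner_sub_right, real_inner_smul_right]
    have hinn : ⟪f' u, Δ⟫ - ⟪f' v, Δ⟫ = ‖Δ‖^2 := by
      rw [← inner_sub_left, ← hΔ, @real_inner_self_eq_norm_sq]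
    rw [hiv] at h1
    rw [hiu, hnwu] at h2
    have h3 : L⁻¹ * ‖Δ‖^2 - L/2 * (L⁻¹^2 * ‖Δ‖^2) ≤ f u - f v - ⟪f' v, u - v⟫ := by
      have hc : L⁻¹ * ⟪f' u, Δ⟫ - L⁻¹ * ⟪f' v, Δ⟫ = L⁻¹ * ‖Δ‖^2 := by
        rw [← mul_sub, hinn]
      linarith [h1, h2, hc.ge, hc.le]
    have hsimp : L⁻¹ * ‖Δ‖^2 - L/2 * (L⁻¹^2 * ‖Δ‖^2) = ‖Δ‖^2/(2*L) := by
      field_simp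
      ring
    rw [hsimp, div_le_iff₀ (by positivity)] at h3
    linarith [h3]

lemma breg_nonneg (f : E → ℝ) (f' : E → E) (hconv : ConvexOn ℝ Set.univ f)
    (hfd : ∀ x, HasGradientAt f (f' x) x) (u v : E) :
    0 ≤ breg f f' u v := by
  have := grad_ineq f f' hconv hfd u v
  simp only [breg]
  linarith

end Aux
set_option maxHeartbeats 4000000 in
theorem stmt_8 {X Y : Type*} [NormedAddCommGroup X] [InnerProductSpace ℝ X]
    [FiniteDimensional ℝ X] [NormedAddCommGroup Y] [InnerProductSpace ℝ Y]
    [FiniteDimensional ℝ Y]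
    (f : X → ℝ) (f' : X → X) (g : Y → ℝ) (g' : Y → Y)
    (h : X × Y → ℝ) (hx : X × Y → X) (hy : X × Y → Y)
    (μx μy Lx Ly Λxx Λxy Λyy : ℝ) (hμx : 0 < μx) (hμy : 0 < μy)
    (hLx : 0 ≤ Lx) (hLy : 0 ≤ Ly) (hΛxx : 0 ≤ Λxx) (hΛxy : 0 ≤ Λxy) (hΛyy : 0 ≤ Λyy)
    (hfconv : ConvexOn ℝ Set.univ f) (hgconv : ConvexOn ℝ Set.univ g)
    (hfd : ∀ x, HasGradientAt f (f' x) x) (hgd : ∀ y, HasGradientAt g (g' y) y)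
    (hfsmooth : ∀ a b : X, ‖f' a - f' b‖ ≤ Lx * ‖a - b‖)
    (hgsmooth : ∀ a b : Y, ‖g' a - g' b‖ ≤ Ly * ‖a - b‖)
    (hcc₁ : ∀ y : Y, ConvexOn ℝ Set.univ (fun x => h (x, y)))
    (hcc₂ : ∀ x : X, ConcaveOn ℝ Set.univ (fun y => h (x, y)))
    (hdx : ∀ p : X × Y, HasGradientAt (fun x => h (x, p.2)) (hx p) p.1)
    (hdy : ∀ p : X × Y, HasGradientAt (fun y => h (p.1, y)) (hy p) p.2)
    (hlip₁ : ∀ u v : X × Y, ‖hx u - hx v‖ ≤ Λxx * ‖u.1 - v.1‖ + Λxy * ‖u.2 - v.2‖)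
    (hlip₂ : ∀ u v : X × Y, ‖hy u - hy v‖ ≤ Λxy * ‖u.1 - v.1‖ + Λyy * ‖u.2 - v.2‖)
    -- `F(x, y) := f(x) + h(x, y) − g(y) + (μˣ/2)‖x‖² − (μʸ/2)‖y‖²` has saddle point `(x⋆, y⋆)`
    (F : X → Y → ℝ)
    (hF : ∀ x y, F x y = f x + h (x, y) - g y + μx / 2 * ‖x‖ ^ 2 - μy / 2 * ‖y‖ ^ 2)
    (xs : X) (ys : Y)
    (hsaddle₁ : ∀ y, F xs y ≤ F xs ys) (hsaddle₂ : ∀ x, F xs ys ≤ F x ys)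
    -- step size
    (lam : ℝ)
    (hlam : lam = 1 + Real.sqrt (Lx / μx) + Real.sqrt (Ly / μy)
        + Λxx / μx + Λxy / Real.sqrt (μx * μy) + Λyy / μy)
    -- iterates and half-iterates of the extragradient recursion
    (zx zf zx2 zf2 : ℕ → X) (zy zg zy2 zg2 : ℕ → Y)
    (hstep₁ : ∀ t, zx2 t = zx t
        - (1 / (lam * μx)) • (μx • zx t + f' (zf t) + hx (zx t, zy t)))
    (hstep₂ : ∀ t, zy2 t = zy t
        - (1 / (lam * μy)) • (μy • zy t + g' (zg t) - hy (zx t, zy t)))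
    (hstep₃ : ∀ t, zf2 t = (1 - 1 / lam) • zf t + (1 / lam) • zx t)
    (hstep₄ : ∀ t, zg2 t = (1 - 1 / lam) • zg t + (1 / lam) • zy t)
    (hstep₅ : ∀ t, zx (t + 1) = (1 / (1 + lam)) • zx2 t + (lam / (1 + lam)) • zx t
        - (1 / ((1 + lam) * μx)) • (μx • zx2 t + f' (zf2 t) + hx (zx2 t, zy2 t)))
    (hstep₆ : ∀ t, zy (t + 1) = (1 / (1 + lam)) • zy2 t + (lam / (1 + lam)) • zy t
        - (1 / ((1 + lam) * μy)) • (μy • zy2 t + g' (zg2 t) - hy (zx2 t, zy2 t)))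
    (hstep₇ : ∀ t, zf (t + 1) = (lam / (1 + lam)) • zf t + (1 / (1 + lam)) • zx2 t)
    (hstep₈ : ∀ t, zg (t + 1) = (lam / (1 + lam)) • zg t + (1 / (1 + lam)) • zy2 t) :
    ∀ t : ℕ,
      μx * (1 / 2 * ‖zx t - xs‖ ^ 2) + μy * (1 / 2 * ‖zy t - ys‖ ^ 2)
          + breg f f' xs (zf t) + breg g g' ys (zg t)
        ≤ (lam / (1 + lam)) ^ t *
            (μx * (1 / 2 * ‖zx 0 - xs‖ ^ 2) + μy * (1 / 2 * ‖zy 0 - ys‖ ^ 2)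
              + breg f f' xs (zf 0) + breg g g' ys (zg 0))  := by
  have hμxne : μx ≠ 0 := ne_of_gt hμx
  have hμyne : μy ≠ 0 := ne_of_gt hμy
  set rx := Real.sqrt (Lx / μx) with hrxdef
  set ry := Real.sqrt (Ly / μy) with hrydef
  set cxx := Λxx / μx with hcxxdef
  set cxy := Λxy / Real.sqrt (μx * μy) with hcxydef
  set cyy := Λyy / μy with hcyydef
  have hrx0 : 0 ≤ rx := Real.sqrt_nonneg _
  have hry0 : 0 ≤ ry := Real.sqrt_nonneg _
  have hcxx0 : 0 ≤ cxx := div_nonneg hΛxx hμx.le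
  have hcyy0 : 0 ≤ cyy := div_nonneg hΛyy hμy.le
  have hcxy0 : 0 ≤ cxy := div_nonneg hΛxy (Real.sqrt_nonneg _)
  have hlam1 : 1 ≤ lam := by rw [hlam]; linarith
  have hlam0 : (0:ℝ) < lam := by linarith
  have h1lam : (0:ℝ) < 1 + lam := by linarith
  have hlamne : lam ≠ 0 := ne_of_gt hlam0
  have h1lamne : (1 + lam) ≠ 0 := ne_of_gt h1lam
  have hLxeq : Lx = rx ^ 2 * μx := by
    rw [hrxdef, Real.sq_sqrt (div_nonneg hLx hμx.le)]
    field_simp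
  have hLyeq : Ly = ry ^ 2 * μy := by
    rw [hrydef, Real.sq_sqrt (div_nonneg hLy hμy.le)]
    field_simp
  have hΛxxeq : Λxx = cxx * μx := by rw [hcxxdef]; field_simp
  have hΛyyeq : Λyy = cyy * μy := by rw [hcyydef]; field_simp
  have hsqxy : Real.sqrt (μx * μy) = Real.sqrt μx * Real.sqrt μy :=
    Real.sqrt_mul hμx.le _
  have hsqxyne : Real.sqrt (μx * μy) ≠ 0 :=
    ne_of_gt (Real.sqrt_pos.2 (by positivity))
  have hΛxyeq : Λxy = cxy * (Real.sqrt μx * Real.sqrt μy) := by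
    rw [hcxydef, ← hsqxy]; field_simp
  have hrxlam : rx ≤ lam := by rw [hlam]; linarith
  have hrylam : ry ≤ lam := by rw [hlam]; linarith
  have hcoefx : 1 + rx + cxx + cxy ≤ lam := by rw [hlam]; linarith
  have hcoefy : 1 + ry + cyy + cxy ≤ lam := by rw [hlam]; linarith
  have sqx := Real.sq_sqrt hμx.le
  have sqy := Real.sq_sqrt hμy.le
  -- gradients of the slices of h
  have hdx' : ∀ (y : Y) (x : X), HasGradientAt (fun x' => h (x', y)) (hx (x, y)) x :=
    fun y x => hdx (x, y)
  have hdy' : ∀ (x : X) (y : Y), HasGradientAt (fun y' => h (x, y')) (hy (x, y)) y :=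
    fun x y => hdy (x, y)
  have hhx : ∀ (y : Y) (u w : X), h (u, y) + ⟪hx (u, y), w - u⟫ ≤ h (w, y) :=
    fun y => grad_ineq _ _ (hcc₁ y) (hdx' y)
  have hGneg : ∀ (x : X) (y : Y), HasGradientAt (fun y' => -h (x, y')) (-(hy (x, y))) y := by
    intro x y
    have h1 := (hdy' x y).hasFDerivAt.neg
    rw [hasGradientAt_iff_hasFDerivAt]
    exact h1.congr_fderiv (by simp)
  have hhy : ∀ (x : X) (u w : Y), -h (x, u) + ⟪-(hy (x, u)), w - u⟫ ≤ -h (x, w) :=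
    fun x => grad_ineq _ _ ((hcc₂ x).neg) (hGneg x)
  -- first-order optimality at the saddle point
  have hox : μx • xs + f' xs + hx (xs, ys) = 0 := by
    have hdir : ∀ d : X, ⟪μx • xs + f' xs + hx (xs, ys), d⟫ = 0 := by
      intro d
      have hψmin : IsLocalMin (fun t : ℝ => F (xs + t • d) ys) 0 :=
        Filter.Eventually.of_forall fun t => by
          simpa using hsaddle₂ (xs + t • d)
      have hA : HasDerivAt (fun t : ℝ => f (xs + t • d)) ⟪f' xs, d⟫ 0 := by
        simpa using hasDerivAt_line f f' hfd xs d 0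
      have hB : HasDerivAt (fun t : ℝ => h (xs + t • d, ys)) ⟪hx (xs, ys), d⟫ 0 := by
        simpa using hasDerivAt_line (fun x => h (x, ys)) (fun x => hx (x, ys)) (hdx' ys) xs d 0
      have hC : HasDerivAt (fun t : ℝ => ‖xs + t • d‖ ^ 2) (⟪xs, d⟫ + ⟪d, xs⟫) 0 := by
        have hl : HasDerivAt (fun t : ℝ => xs + t • d) d 0 := by
          simpa using ((hasDerivAt_id (0:ℝ)).smul_const d).const_add xs
        have hinner := HasDerivAt.inner ℝ hl hl
        have hfun : (fun t : ℝ => ⟪xs + t • d, xs + t • d⟫) = (fun t : ℝ => ‖xs + t • d‖ ^ 2) :=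
          funext fun t => real_inner_self_eq_norm_sq _
        rw [hfun] at hinner
        simpa using hinner
      have hψd : HasDerivAt (fun t : ℝ => F (xs + t • d) ys)
          (⟪f' xs, d⟫ + ⟪hx (xs, ys), d⟫ + μx / 2 * (⟪xs, d⟫ + ⟪d, xs⟫)) 0 := by
        have hψeq : (fun t : ℝ => F (xs + t • d) ys)
            = fun t : ℝ => f (xs + t • d) + h (xs + t • d, ys) - g ys
              + μx / 2 * ‖xs + t • d‖ ^ 2 - μy / 2 * ‖ys‖ ^ 2 :=
          funext fun t => hF _ _
        rw [hψeq]
        have htot := (((hA.add hB).sub_const (g ys)).add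
          (HasDerivAt.const_mul (μx / 2) hC)).sub_const (μy / 2 * ‖ys‖ ^ 2)
        exact htot.congr_deriv (by ring)
      have hzero := hψmin.hasDerivAt_eq_zero hψd
      have eG : ⟪μx • xs + f' xs + hx (xs, ys), d⟫
          = ⟪f' xs, d⟫ + ⟪hx (xs, ys), d⟫ + μx / 2 * (⟪xs, d⟫ + ⟪d, xs⟫) := by
        simp only [inner_add_left, real_inner_smul_left]
        rw [real_inner_comm d xs]
        ring
      rw [eG, hzero]
    have h9 := hdir (μx • xs + f' xs + hx (xs, ys))
    exact inner_self_eq_zero.mp h9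
  have hoy : μy • ys + g' ys - hy (xs, ys) = 0 := by
    have hdir : ∀ e : Y, ⟪hy (xs, ys) - g' ys - μy • ys, e⟫ = 0 := by
      intro e
      have hψmax : IsLocalMax (fun t : ℝ => F xs (ys + t • e)) 0 :=
        Filter.Eventually.of_forall fun t => by
          simpa using hsaddle₁ (ys + t • e)
      have hB : HasDerivAt (fun t : ℝ => h (xs, ys + t • e)) ⟪hy (xs, ys), e⟫ 0 := by
        simpa using hasDerivAt_line (fun y => h (xs, y)) (fun y => hy (xs, y)) (hdy' xs) ys e 0
      have hg2 : HasDerivAt (fun t : ℝ => g (ys + t • e)) ⟪g' ys, e⟫ 0 := by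
        simpa using hasDerivAt_line g g' hgd ys e 0
      have hC : HasDerivAt (fun t : ℝ => ‖ys + t • e‖ ^ 2) (⟪ys, e⟫ + ⟪e, ys⟫) 0 := by
        have hl : HasDerivAt (fun t : ℝ => ys + t • e) e 0 := by
          simpa using ((hasDerivAt_id (0:ℝ)).smul_const e).const_add ys
        have hinner := HasDerivAt.inner ℝ hl hl
        have hfun : (fun t : ℝ => ⟪ys + t • e, ys + t • e⟫) = (fun t : ℝ => ‖ys + t • e‖ ^ 2) :=
          funext fun t => real_inner_self_eq_norm_sq _
        rw [hfun] at hinner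
        simpa using hinner
      have hψd : HasDerivAt (fun t : ℝ => F xs (ys + t • e))
          (⟪hy (xs, ys), e⟫ - ⟪g' ys, e⟫ - μy / 2 * (⟪ys, e⟫ + ⟪e, ys⟫)) 0 := by
        have hψeq : (fun t : ℝ => F xs (ys + t • e))
            = fun t : ℝ => f xs + h (xs, ys + t • e) - g (ys + t • e)
              + μx / 2 * ‖xs‖ ^ 2 - μy / 2 * ‖ys + t • e‖ ^ 2 :=
          funext fun t => hF _ _
        rw [hψeq]
        have htot := ((((hasDerivAt_const (0:ℝ) (f xs)).add hB).sub hg2).add_const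
          (μx / 2 * ‖xs‖ ^ 2)).sub (HasDerivAt.const_mul (μy / 2) hC)
        exact htot.congr_deriv (by ring)
      have hzero := hψmax.hasDerivAt_eq_zero hψd
      have eG : ⟪hy (xs, ys) - g' ys - μy • ys, e⟫
          = ⟪hy (xs, ys), e⟫ - ⟪g' ys, e⟫ - μy / 2 * (⟪ys, e⟫ + ⟪e, ys⟫) := by
        simp only [inner_sub_left, real_inner_smul_left]
        rw [real_inner_comm e ys]
        ring
      rw [eG, hzero]
    have h9 := hdir (hy (xs, ys) - g' ys - μy • ys)
    have h10 : hy (xs, ys) - g' ys - μy • ys = 0 := inner_self_eq_zero.mp h9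
    have h11 : μy • ys + g' ys - hy (xs, ys) = -(hy (xs, ys) - g' ys - μy • ys) := by module
    rw [h11, h10, neg_zero]
  -- the potential
  set P : ℕ → ℝ := fun t => μx * (1/2 * ‖zx t - xs‖ ^ 2) + μy * (1/2 * ‖zy t - ys‖ ^ 2)
    + breg f f' xs (zf t) + breg g g' ys (zg t) with hP
  have key : ∀ n : ℕ, (1 + lam) * P (n + 1) ≤ lam * P n := by
    intro n
    simp only [hP]
    have hs1 := hstep₁ n; have hs2 := hstep₂ n; have hs3 := hstep₃ n; have hs4 := hstep₄ n
    have hs5 := hstep₅ n; have hs6 := hstep₆ n; have hs7 := hstep₇ n; have hs8 := hstep₈ n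
    set a := zx n with ha; set b := zy n with hb; set p := zf n with hp; set q := zg n with hq
    set a' := zx2 n with ha'; set b' := zy2 n with hb'
    set p' := zf2 n with hp'; set q' := zg2 n with hq'
    set a2 := zx (n+1) with ha2; set b2 := zy (n+1) with hb2
    set p2 := zf (n+1) with hp2; set q2 := zg (n+1) with hq2
    -- vector identities from the update rules
    have hva : (lam*μx) • (a - a') = μx • a + f' p + hx (a, b) := by
      have h1 : a - a' = (1/(lam*μx)) • (μx • a + f' p + hx (a, b)) := by rw [hs1]; abel
      rw [h1, smul_smul, show (lam*μx) * (1/(lam*μx)) = 1 by field_simp, one_smul]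
    have hvb : (lam*μy) • (b - b') = μy • b + g' q - hy (a, b) := by
      have h1 : b - b' = (1/(lam*μy)) • (μy • b + g' q - hy (a, b)) := by rw [hs2]; abel
      rw [h1, smul_smul, show (lam*μy) * (1/(lam*μy)) = 1 by field_simp, one_smul]
    have hvp : lam • p' = (lam - 1) • p + a := by
      rw [hs3, smul_add, smul_smul, smul_smul,
        show lam * (1 - 1/lam) = lam - 1 by field_simp,
        show lam * (1/lam) = 1 by field_simp, one_smul]
    have hvq : lam • q' = (lam - 1) • q + b := by
      rw [hs4, smul_add, smul_smul, smul_smul,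
        show lam * (1 - 1/lam) = lam - 1 by field_simp,
        show lam * (1/lam) = 1 by field_simp, one_smul]
    have hvtx : μx • (a' - a2) + (lam*μx) • (a - a2) = μx • a' + f' p' + hx (a', b') := by
      set v := μx • a' + f' p' + hx (a', b') with hv
      have h1 := congrArg (fun z : X => ((1+lam)*μx) • z) hs5
      simp only [smul_sub, smul_add, smul_smul] at h1
      rw [show (1+lam)*μx * (1/(1+lam)) = μx by field_simp,
        show (1+lam)*μx * (lam/(1+lam)) = lam*μx by field_simp <;> ring,
        show (1+lam)*μx * (1/((1+lam)*μx)) = 1 by field_simp, one_smul] at h1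
      have h2 : v = μx • a' + (lam*μx) • a - ((1+lam)*μx) • a2 := by
        rw [eq_sub_iff_add_eq] at h1
        rw [← h1]; abel
      rw [h2]; module
    have hvty : μy • (b' - b2) + (lam*μy) • (b - b2) = μy • b' + g' q' - hy (a', b') := by
      set v := μy • b' + g' q' - hy (a', b') with hv
      have h1 := congrArg (fun z : Y => ((1+lam)*μy) • z) hs6
      simp only [smul_sub, smul_add, smul_smul] at h1
      rw [show (1+lam)*μy * (1/(1+lam)) = μy by field_simp,
        show (1+lam)*μy * (lam/(1+lam)) = lam*μy by field_simp <;> ring,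
        show (1+lam)*μy * (1/((1+lam)*μy)) = 1 by field_simp, one_smul] at h1
      have h2 : v = μy • b' + (lam*μy) • b - ((1+lam)*μy) • b2 := by
        rw [eq_sub_iff_add_eq] at h1
        rw [← h1]; abel
      rw [h2]; module
    have hvp2 : (1+lam) • p2 = lam • p + a' := by
      rw [hs7, smul_add, smul_smul, smul_smul,
        show (1+lam)*(lam/(1+lam)) = lam by field_simp <;> ring,
        show (1+lam)*(1/(1+lam)) = 1 by field_simp, one_smul]
    have hvq2 : (1+lam) • q2 = lam • q + b' := by
      rw [hs8, smul_add, smul_smul, smul_smul,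
        show (1+lam)*(lam/(1+lam)) = lam by field_simp <;> ring,
        show (1+lam)*(1/(1+lam)) = 1 by field_simp, one_smul]
    have kp2 : ∀ w : X, (1+lam) * ⟪w, p2⟫ = lam * ⟪w, p⟫ + ⟪w, a'⟫ := by
      intro w
      have h1 := congrArg (fun z : X => ⟪w, z⟫) hvp2
      simpa only [real_inner_smul_right, inner_add_right] using h1
    have kq2 : ∀ w : Y, (1+lam) * ⟪w, q2⟫ = lam * ⟪w, q⟫ + ⟪w, b'⟫ := by
      intro w
      have h1 := congrArg (fun z : Y => ⟪w, z⟫) hvq2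
      simpa only [real_inner_smul_right, inner_add_right] using h1
    -- x-side scalar identities
    have S1 : ⟪μx • a' + f' p' + hx (a', b'), a2 - xs⟫
        = μx*(1/2*‖a'-xs‖^2 - 1/2*‖a2-xs‖^2 - 1/2*‖a'-a2‖^2)
          + (lam*μx)*(1/2*‖a-xs‖^2 - 1/2*‖a2-xs‖^2 - 1/2*‖a-a2‖^2) := by
      rw [← hvtx, inner_add_left, real_inner_smul_left, real_inner_smul_left,
        three_point a' a2 xs, three_point a a2 xs]
    have S1y : ⟪μy • b' + g' q' - hy (a', b'), b2 - ys⟫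
        = μy*(1/2*‖b'-ys‖^2 - 1/2*‖b2-ys‖^2 - 1/2*‖b'-b2‖^2)
          + (lam*μy)*(1/2*‖b-ys‖^2 - 1/2*‖b2-ys‖^2 - 1/2*‖b-b2‖^2) := by
      rw [← hvty, inner_add_left, real_inner_smul_left, real_inner_smul_left,
        three_point b' b2 ys, three_point b b2 ys]
    have hvx' : μx • a' + f' p' + hx (a', b')
        = μx • (a'-xs) + (f' p' - f' xs) + (hx (a', b') - hx (xs, ys)) := by
      have h0 : μx • a' + f' p' + hx (a', b')
          = μx • a' + f' p' + hx (a', b') - (μx • xs + f' xs + hx (xs, ys)) := by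
        rw [hox, sub_zero]
      rw [h0]; module
    have hvy' : μy • b' + g' q' - hy (a', b')
        = μy • (b'-ys) + (g' q' - g' ys) - (hy (a', b') - hy (xs, ys)) := by
      have h0 : μy • b' + g' q' - hy (a', b')
          = μy • b' + g' q' - hy (a', b') - (μy • ys + g' ys - hy (xs, ys)) := by
        rw [hoy, sub_zero]
      rw [h0]; module
    have S2 : ⟪μx • a' + f' p' + hx (a', b'), a' - xs⟫
        = μx*(2*(1/2*‖a'-xs‖^2)) + ⟪f' p' - f' xs, a' - xs⟫
          + ⟪hx (a', b') - hx (xs, ys), a' - xs⟫ := by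
      rw [hvx', inner_add_left, inner_add_left, real_inner_smul_left,
        real_inner_self_eq_norm_sq]
      ring
    have S2y : ⟪μy • b' + g' q' - hy (a', b'), b' - ys⟫
        = μy*(2*(1/2*‖b'-ys‖^2)) + ⟪g' q' - g' ys, b' - ys⟫
          - ⟪hy (a', b') - hy (xs, ys), b' - ys⟫ := by
      rw [hvy', inner_sub_left, inner_add_left, real_inner_smul_left,
        real_inner_self_eq_norm_sq]
      ring
    have S3 : ⟪μx • a' + f' p' + hx (a', b'), a' - xs⟫
          - ⟪μx • a' + f' p' + hx (a', b'), a2 - xs⟫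
        = ⟪(μx • a' + f' p' + hx (a', b')) - (μx • a + f' p + hx (a, b)), a' - a2⟫
          + (lam*μx)*(1/2*‖a-a2‖^2 - 1/2*‖a'-a2‖^2 - 1/2*‖a-a'‖^2) := by
      rw [← inner_sub_right, show (a' - xs) - (a2 - xs) = a' - a2 by abel]
      have e2 : ⟪μx • a' + f' p' + hx (a', b'), a' - a2⟫
          = ⟪(μx • a' + f' p' + hx (a', b')) - (μx • a + f' p + hx (a, b)), a' - a2⟫
            + ⟪μx • a + f' p + hx (a, b), a' - a2⟫ := by
        rw [← inner_add_left, sub_add_cancel]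
      rw [e2, ← hva, real_inner_smul_left, three_point a a' a2]
    have S3y : ⟪μy • b' + g' q' - hy (a', b'), b' - ys⟫
          - ⟪μy • b' + g' q' - hy (a', b'), b2 - ys⟫
        = ⟪(μy • b' + g' q' - hy (a', b')) - (μy • b + g' q - hy (a, b)), b' - b2⟫
          + (lam*μy)*(1/2*‖b-b2‖^2 - 1/2*‖b'-b2‖^2 - 1/2*‖b-b'‖^2) := by
      rw [← inner_sub_right, show (b' - ys) - (b2 - ys) = b' - b2 by abel]
      have e2 : ⟪μy • b' + g' q' - hy (a', b'), b' - b2⟫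
          = ⟪(μy • b' + g' q' - hy (a', b')) - (μy • b + g' q - hy (a, b)), b' - b2⟫
            + ⟪μy • b + g' q - hy (a, b), b' - b2⟫ := by
        rw [← inner_add_left, sub_add_cancel]
      rw [e2, ← hvb, real_inner_smul_left, three_point b b' b2]
    have S4 : (1+lam) * breg f f' xs p2 - lam * breg f f' xs p - ⟪f' p' - f' xs, a' - xs⟫
        = (1+lam) * (f p2 - f p' - ⟪f' p', p2 - p'⟫) - lam * (f p - f p' - ⟪f' p', p - p'⟫)
          - (f xs - f p' - ⟪f' p', xs - p'⟫) := by
      simp only [breg, inner_sub_left, inner_sub_right]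
      linear_combination kp2 (f' p') - kp2 (f' xs)
    have S4y : (1+lam) * breg g g' ys q2 - lam * breg g g' ys q - ⟪g' q' - g' ys, b' - ys⟫
        = (1+lam) * (g q2 - g q' - ⟪g' q', q2 - q'⟫) - lam * (g q - g q' - ⟪g' q', q - q'⟫)
          - (g ys - g q' - ⟪g' q', ys - q'⟫) := by
      simp only [breg, inner_sub_left, inner_sub_right]
      linear_combination kq2 (g' q') - kq2 (g' ys)
    -- Bregman nonnegativity facts
    have hDf0 : 0 ≤ f p - f p' - ⟪f' p', p - p'⟫ := by
      have h9 := grad_ineq f f' hfconv hfd p' p; linarith only [h9]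
    have hDg0 : 0 ≤ g q - g q' - ⟪g' q', q - q'⟫ := by
      have h9 := grad_ineq g g' hgconv hgd q' q; linarith only [h9]
    have hDxs0 : 0 ≤ f xs - f p' - ⟪f' p', xs - p'⟫ := by
      have h9 := grad_ineq f f' hfconv hfd p' xs; linarith only [h9]
    have hDys0 : 0 ≤ g ys - g q' - ⟪g' q', ys - q'⟫ := by
      have h9 := grad_ineq g g' hgconv hgd q' ys; linarith only [h9]
    -- S5 : smoothness bound on the new Bregman term (x side)
    have S5 : (1+lam) * (f p2 - f p' - ⟪f' p', p2 - p'⟫)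
        ≤ Lx/lam * (1/2*‖a-a'‖^2) + (f p - f p' - ⟪f' p', p - p'⟫) := by
      set w1 := p' + (1/lam) • (a' - a) with hw1
      have hcomb : p2 = (lam/(1+lam)) • w1 + (1/(1+lam)) • p := by
        have hgoal : (1+lam) • p2 = (1+lam) • ((lam/(1+lam)) • w1 + (1/(1+lam)) • p) := by
          rw [hvp2, smul_add, smul_smul, smul_smul,
            show (1+lam)*(lam/(1+lam)) = lam by field_simp <;> ring,
            show (1+lam)*(1/(1+lam)) = 1 by field_simp, one_smul, hw1, smul_add, smul_smul,
            show lam*(1/lam) = 1 by field_simp, one_smul, hvp]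
          module
        exact smul_right_injective X h1lamne hgoal
      have hθ0 : (0:ℝ) ≤ lam/(1+lam) := by positivity
      have hτ0 : (0:ℝ) ≤ 1/(1+lam) := by positivity
      have hsum : lam/(1+lam) + 1/(1+lam) = 1 := by field_simp <;> ring
      have hj := hfconv.2 (Set.mem_univ w1) (Set.mem_univ p) hθ0 hτ0 hsum
      simp only [smul_eq_mul] at hj
      rw [← hcomb] at hj
      have hj' : (1+lam) * f p2 ≤ lam * f w1 + f p := by
        have h2 := mul_le_mul_of_nonneg_left hj (le_of_lt h1lam)
        calc (1+lam) * f p2 ≤ (1+lam) * (lam/(1+lam) * f w1 + 1/(1+lam) * f p) := h2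
          _ = lam * f w1 + f p := by field_simp <;> ring
      have hlin : (1+lam) * ⟪f' p', p2 - p'⟫ = lam * ⟪f' p', w1 - p'⟫ + ⟪f' p', p - p'⟫ := by
        have hv : (1+lam) • (p2 - p') = lam • (w1 - p') + (p - p') := by
          rw [hcomb]
          match_scalars <;> field_simp <;> ring
        have h3 := congrArg (fun z : X => ⟪f' p', z⟫) hv
        simpa only [real_inner_smul_right, inner_add_right] using h3
      have hdesc := descent f f' hfd Lx hLx hfsmooth p' w1
      have hw1n : ‖w1 - p'‖^2 = (1/lam)^2 * ‖a-a'‖^2 := by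
        rw [hw1, add_sub_cancel_left, norm_smul, Real.norm_eq_abs,
          abs_of_nonneg (by positivity : (0:ℝ) ≤ 1/lam), mul_pow, norm_sub_rev]
      have hdesc' : lam * f w1 ≤ lam * f p' + lam * ⟪f' p', w1 - p'⟫ + Lx/lam*(1/2*‖a-a'‖^2) := by
        have h4 := mul_le_mul_of_nonneg_left hdesc hlam0.le
        rw [hw1n] at h4
        calc lam * f w1 ≤ lam * (f p' + ⟪f' p', w1-p'⟫ + Lx/2*((1/lam)^2*‖a-a'‖^2)) := h4
          _ = lam * f p' + lam*⟪f' p', w1-p'⟫ + Lx/lam*(1/2*‖a-a'‖^2) := by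
            field_simp <;> ring
      linarith only [hj', hlin, hdesc']
    have S5y : (1+lam) * (g q2 - g q' - ⟪g' q', q2 - q'⟫)
        ≤ Ly/lam * (1/2*‖b-b'‖^2) + (g q - g q' - ⟪g' q', q - q'⟫) := by
      set w1 := q' + (1/lam) • (b' - b) with hw1
      have hcomb : q2 = (lam/(1+lam)) • w1 + (1/(1+lam)) • q := by
        have hgoal : (1+lam) • q2 = (1+lam) • ((lam/(1+lam)) • w1 + (1/(1+lam)) • q) := by
          rw [hvq2, smul_add, smul_smul, smul_smul,
            show (1+lam)*(lam/(1+lam)) = lam by field_simp <;> ring,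
            show (1+lam)*(1/(1+lam)) = 1 by field_simp, one_smul, hw1, smul_add, smul_smul,
            show lam*(1/lam) = 1 by field_simp, one_smul, hvq]
          module
        exact smul_right_injective Y h1lamne hgoal
      have hθ0 : (0:ℝ) ≤ lam/(1+lam) := by positivity
      have hτ0 : (0:ℝ) ≤ 1/(1+lam) := by positivity
      have hsum : lam/(1+lam) + 1/(1+lam) = 1 := by field_simp <;> ring
      have hj := hgconv.2 (Set.mem_univ w1) (Set.mem_univ q) hθ0 hτ0 hsum
      simp only [smul_eq_mul] at hj
      rw [← hcomb] at hj
      have hj' : (1+lam) * g q2 ≤ lam * g w1 + g q := by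
        have h2 := mul_le_mul_of_nonneg_left hj (le_of_lt h1lam)
        calc (1+lam) * g q2 ≤ (1+lam) * (lam/(1+lam) * g w1 + 1/(1+lam) * g q) := h2
          _ = lam * g w1 + g q := by field_simp <;> ring
      have hlin : (1+lam) * ⟪g' q', q2 - q'⟫ = lam * ⟪g' q', w1 - q'⟫ + ⟪g' q', q - q'⟫ := by
        have hv : (1+lam) • (q2 - q') = lam • (w1 - q') + (q - q') := by
          rw [hcomb]
          match_scalars <;> field_simp <;> ring
        have h3 := congrArg (fun z : Y => ⟪g' q', z⟫) hv
        simpa only [real_inner_smul_right, inner_add_right] using h3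
      have hdesc := descent g g' hgd Ly hLy hgsmooth q' w1
      have hw1n : ‖w1 - q'‖^2 = (1/lam)^2 * ‖b-b'‖^2 := by
        rw [hw1, add_sub_cancel_left, norm_smul, Real.norm_eq_abs,
          abs_of_nonneg (by positivity : (0:ℝ) ≤ 1/lam), mul_pow, norm_sub_rev]
      have hdesc' : lam * g w1 ≤ lam * g q' + lam * ⟪g' q', w1 - q'⟫ + Ly/lam*(1/2*‖b-b'‖^2) := by
        have h4 := mul_le_mul_of_nonneg_left hdesc hlam0.le
        rw [hw1n] at h4
        calc lam * g w1 ≤ lam * (g q' + ⟪g' q', w1-q'⟫ + Ly/2*((1/lam)^2*‖b-b'‖^2)) := h4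
          _ = lam * g q' + lam*⟪g' q', w1-q'⟫ + Ly/lam*(1/2*‖b-b'‖^2) := by
            field_simp <;> ring
      linarith only [hj', hlin, hdesc']
    -- T3 bounds (Cauchy-Schwarz + Lipschitz)
    have hvmw : (μx • a' + f' p' + hx (a', b')) - (μx • a + f' p + hx (a, b))
        = μx • (a' - a) + (f' p' - f' p) + (hx (a', b') - hx (a, b)) := by module
    have hvmwy : (μy • b' + g' q' - hy (a', b')) - (μy • b + g' q - hy (a, b))
        = μy • (b' - b) + (g' q' - g' q) - (hy (a', b') - hy (a, b)) := by module
    have hT3 : ⟪(μx • a' + f' p' + hx (a', b')) - (μx • a + f' p + hx (a, b)), a' - a2⟫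
        ≤ μx*(‖a-a'‖*‖a'-a2‖) + ‖f' p - f' p'‖*‖a'-a2‖
          + (Λxx*‖a-a'‖ + Λxy*‖b-b'‖)*‖a'-a2‖ := by
      rw [hvmw, inner_add_left, inner_add_left, real_inner_smul_left]
      have c1 : ⟪a'-a, a'-a2⟫ ≤ ‖a-a'‖*‖a'-a2‖ := by
        calc ⟪a'-a, a'-a2⟫ ≤ ‖a'-a‖*‖a'-a2‖ := real_inner_le_norm _ _
          _ = ‖a-a'‖*‖a'-a2‖ := by rw [norm_sub_rev]
      have c2 : ⟪f' p' - f' p, a'-a2⟫ ≤ ‖f' p - f' p'‖*‖a'-a2‖ := by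
        calc ⟪f' p' - f' p, a'-a2⟫ ≤ ‖f' p' - f' p‖*‖a'-a2‖ := real_inner_le_norm _ _
          _ = ‖f' p - f' p'‖*‖a'-a2‖ := by rw [norm_sub_rev]
      have c3 : ⟪hx (a',b') - hx (a,b), a'-a2⟫ ≤ (Λxx*‖a-a'‖ + Λxy*‖b-b'‖)*‖a'-a2‖ := by
        calc ⟪hx (a',b') - hx (a,b), a'-a2⟫ ≤ ‖hx (a',b') - hx (a,b)‖*‖a'-a2‖ :=
              real_inner_le_norm _ _
          _ ≤ (Λxx*‖a'-a‖ + Λxy*‖b'-b‖)*‖a'-a2‖ := by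
              apply mul_le_mul_of_nonneg_right _ (norm_nonneg _)
              simpa using hlip₁ (a',b') (a,b)
          _ = (Λxx*‖a-a'‖ + Λxy*‖b-b'‖)*‖a'-a2‖ := by
              rw [norm_sub_rev a' a, norm_sub_rev b' b]
      linarith only [mul_le_mul_of_nonneg_left c1 hμx.le, c2, c3]
    have hT3y : ⟪(μy • b' + g' q' - hy (a', b')) - (μy • b + g' q - hy (a, b)), b' - b2⟫
        ≤ μy*(‖b-b'‖*‖b'-b2‖) + ‖g' q - g' q'‖*‖b'-b2‖
          + (Λxy*‖a-a'‖ + Λyy*‖b-b'‖)*‖b'-b2‖ := by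
      rw [hvmwy, inner_sub_left, inner_add_left, real_inner_smul_left]
      have c1 : ⟪b'-b, b'-b2⟫ ≤ ‖b-b'‖*‖b'-b2‖ := by
        calc ⟪b'-b, b'-b2⟫ ≤ ‖b'-b‖*‖b'-b2‖ := real_inner_le_norm _ _
          _ = ‖b-b'‖*‖b'-b2‖ := by rw [norm_sub_rev]
      have c2 : ⟪g' q' - g' q, b'-b2⟫ ≤ ‖g' q - g' q'‖*‖b'-b2‖ := by
        calc ⟪g' q' - g' q, b'-b2⟫ ≤ ‖g' q' - g' q‖*‖b'-b2‖ := real_inner_le_norm _ _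
          _ = ‖g' q - g' q'‖*‖b'-b2‖ := by rw [norm_sub_rev]
      have c3 : -⟪hy (a',b') - hy (a,b), b'-b2⟫ ≤ (Λxy*‖a-a'‖ + Λyy*‖b-b'‖)*‖b'-b2‖ := by
        calc -⟪hy (a',b') - hy (a,b), b'-b2⟫ = ⟪-(hy (a',b') - hy (a,b)), b'-b2⟫ := by
              rw [inner_neg_left]
          _ ≤ ‖-(hy (a',b') - hy (a,b))‖*‖b'-b2‖ := real_inner_le_norm _ _
          _ = ‖hy (a',b') - hy (a,b)‖*‖b'-b2‖ := by rw [norm_neg]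
          _ ≤ (Λxy*‖a'-a‖ + Λyy*‖b'-b‖)*‖b'-b2‖ := by
              apply mul_le_mul_of_nonneg_right _ (norm_nonneg _)
              simpa using hlip₂ (a',b') (a,b)
          _ = (Λxy*‖a-a'‖ + Λyy*‖b-b'‖)*‖b'-b2‖ := by
              rw [norm_sub_rev a' a, norm_sub_rev b' b]
      linarith only [mul_le_mul_of_nonneg_left c1 hμy.le, c2, c3]
    -- Young's inequalities
    have hy1 : μx*(‖a-a'‖*‖a'-a2‖) ≤ μx*(1/2*‖a-a'‖^2) + μx*(1/2*‖a'-a2‖^2) := by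
      nlinarith only [mul_nonneg hμx.le (sq_nonneg (‖a-a'‖ - ‖a'-a2‖))]
    have hy1y : μy*(‖b-b'‖*‖b'-b2‖) ≤ μy*(1/2*‖b-b'‖^2) + μy*(1/2*‖b'-b2‖^2) := by
      nlinarith only [mul_nonneg hμy.le (sq_nonneg (‖b-b'‖ - ‖b'-b2‖))]
    have hcoco := coco f f' hfconv hfd Lx hLx hfsmooth p p'
    have hcocoy := coco g g' hgconv hgd Ly hLy hgsmooth q q'
    have hy2 : ‖f' p - f' p'‖*‖a'-a2‖
        ≤ rx*(f p - f p' - ⟪f' p', p - p'⟫) + rx*μx*(1/2*‖a'-a2‖^2) := by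
      rcases eq_or_lt_of_le hrx0 with h0 | hpos
      · have hLx0 : Lx = 0 := by rw [hLxeq, ← h0]; ring
        have hsq : ‖f' p - f' p'‖^2 ≤ 0 := by
          rw [hLx0] at hcoco; linarith only [hcoco]
        have hn0 : ‖f' p - f' p'‖ = 0 := by nlinarith only [norm_nonneg (f' p - f' p'), hsq]
        rw [hn0, ← h0]; simp
      · rw [hLxeq] at hcoco
        have am : 2*(rx*μx)*(‖f' p - f' p'‖*‖a'-a2‖)
            ≤ ‖f' p - f' p'‖^2 + (rx*μx)^2*‖a'-a2‖^2 := by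
          nlinarith only [sq_nonneg (‖f' p - f' p'‖ - rx*μx*‖a'-a2‖)]
        have h2 : (0:ℝ) < 2*(rx*μx) := by positivity
        rw [← mul_le_mul_iff_right₀ h2]
        calc 2*(rx*μx)*(‖f' p - f' p'‖*‖a'-a2‖)
            ≤ ‖f' p - f' p'‖^2 + (rx*μx)^2*‖a'-a2‖^2 := am
          _ ≤ 2*(rx^2*μx)*(f p - f p' - ⟪f' p', p - p'⟫) + (rx*μx)^2*‖a'-a2‖^2 := by
              linarith only [hcoco]
          _ = 2*(rx*μx)*(rx*(f p - f p' - ⟪f' p', p - p'⟫) + rx*μx*(1/2*‖a'-a2‖^2)) := by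
              ring
    have hy2y : ‖g' q - g' q'‖*‖b'-b2‖
        ≤ ry*(g q - g q' - ⟪g' q', q - q'⟫) + ry*μy*(1/2*‖b'-b2‖^2) := by
      rcases eq_or_lt_of_le hry0 with h0 | hpos
      · have hLy0 : Ly = 0 := by rw [hLyeq, ← h0]; ring
        have hsq : ‖g' q - g' q'‖^2 ≤ 0 := by
          rw [hLy0] at hcocoy; linarith only [hcocoy]
        have hn0 : ‖g' q - g' q'‖ = 0 := by nlinarith only [norm_nonneg (g' q - g' q'), hsq]
        rw [hn0, ← h0]; simp
      · rw [hLyeq] at hcocoy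
        have am : 2*(ry*μy)*(‖g' q - g' q'‖*‖b'-b2‖)
            ≤ ‖g' q - g' q'‖^2 + (ry*μy)^2*‖b'-b2‖^2 := by
          nlinarith only [sq_nonneg (‖g' q - g' q'‖ - ry*μy*‖b'-b2‖)]
        have h2 : (0:ℝ) < 2*(ry*μy) := by positivity
        rw [← mul_le_mul_iff_right₀ h2]
        calc 2*(ry*μy)*(‖g' q - g' q'‖*‖b'-b2‖)
            ≤ ‖g' q - g' q'‖^2 + (ry*μy)^2*‖b'-b2‖^2 := am
          _ ≤ 2*(ry^2*μy)*(g q - g q' - ⟪g' q', q - q'⟫) + (ry*μy)^2*‖b'-b2‖^2 := by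
              linarith only [hcocoy]
          _ = 2*(ry*μy)*(ry*(g q - g q' - ⟪g' q', q - q'⟫) + ry*μy*(1/2*‖b'-b2‖^2)) := by
              ring
    have hy3 : Λxx*‖a-a'‖*‖a'-a2‖ ≤ cxx*μx*(1/2*‖a-a'‖^2) + cxx*μx*(1/2*‖a'-a2‖^2) := by
      rw [hΛxxeq]
      nlinarith only [mul_nonneg (mul_nonneg hcxx0 hμx.le) (sq_nonneg (‖a-a'‖ - ‖a'-a2‖))]
    have hy3y : Λyy*‖b-b'‖*‖b'-b2‖ ≤ cyy*μy*(1/2*‖b-b'‖^2) + cyy*μy*(1/2*‖b'-b2‖^2) := by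
      rw [hΛyyeq]
      nlinarith only [mul_nonneg (mul_nonneg hcyy0 hμy.le) (sq_nonneg (‖b-b'‖ - ‖b'-b2‖))]
    have hy4 : Λxy*‖b-b'‖*‖a'-a2‖ ≤ cxy*(μy*(1/2*‖b-b'‖^2)) + cxy*(μx*(1/2*‖a'-a2‖^2)) := by
      rw [hΛxyeq]
      have e1 : (Real.sqrt μy * ‖b-b'‖)^2 = μy*‖b-b'‖^2 := by rw [mul_pow, sqy]
      have e2 : (Real.sqrt μx * ‖a'-a2‖)^2 = μx*‖a'-a2‖^2 := by rw [mul_pow, sqx]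
      have base : (Real.sqrt μx * Real.sqrt μy)*(‖b-b'‖*‖a'-a2‖)
          ≤ μy*(1/2*‖b-b'‖^2) + μx*(1/2*‖a'-a2‖^2) := by
        nlinarith only [sq_nonneg (Real.sqrt μy * ‖b-b'‖ - Real.sqrt μx * ‖a'-a2‖), e1, e2]
      linarith only [mul_le_mul_of_nonneg_left base hcxy0]
    have hy4y : Λxy*‖a-a'‖*‖b'-b2‖ ≤ cxy*(μx*(1/2*‖a-a'‖^2)) + cxy*(μy*(1/2*‖b'-b2‖^2)) := by
      rw [hΛxyeq]
      have e1 : (Real.sqrt μx * ‖a-a'‖)^2 = μx*‖a-a'‖^2 := by rw [mul_pow, sqx]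
      have e2 : (Real.sqrt μy * ‖b'-b2‖)^2 = μy*‖b'-b2‖^2 := by rw [mul_pow, sqy]
      have base : (Real.sqrt μx * Real.sqrt μy)*(‖a-a'‖*‖b'-b2‖)
          ≤ μx*(1/2*‖a-a'‖^2) + μy*(1/2*‖b'-b2‖^2) := by
        nlinarith only [sq_nonneg (Real.sqrt μx * ‖a-a'‖ - Real.sqrt μy * ‖b'-b2‖), e1, e2]
      linarith only [mul_le_mul_of_nonneg_left base hcxy0]
    -- monotonicity of the convex-concave coupling
    have hHxy : 0 ≤ ⟪hx (a',b') - hx (xs,ys), a'-xs⟫ - ⟪hy (a',b') - hy (xs,ys), b'-ys⟫ := by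
      have c1 := hhx b' a' xs
      have c2 := hhx ys xs a'
      have c3 := hhy a' b' ys
      have c4 := hhy xs ys b'
      have e1 : ⟪hx (a',b'), xs - a'⟫ = -⟪hx (a',b'), a' - xs⟫ := by
        rw [show xs - a' = -(a' - xs) by abel, inner_neg_right]
      have e3 : ⟪-(hy (a',b')), ys - b'⟫ = ⟪hy (a',b'), b' - ys⟫ := by
        rw [inner_neg_left, show ys - b' = -(b' - ys) by abel, inner_neg_right]; ring
      have e4 : ⟪-(hy (xs,ys)), b' - ys⟫ = -⟪hy (xs,ys), b' - ys⟫ := by rw [inner_neg_left]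
      simp only [inner_sub_left]
      linarith only [c1, c2, c3, c4, e1, e3, e4]
    -- budget inequalities
    have hA2nn : (0:ℝ) ≤ 1/2*‖a-a'‖^2 := by positivity
    have hA3nn : (0:ℝ) ≤ 1/2*‖a'-a2‖^2 := by positivity
    have hB2nn : (0:ℝ) ≤ 1/2*‖b-b'‖^2 := by positivity
    have hB3nn : (0:ℝ) ≤ 1/2*‖b'-b2‖^2 := by positivity
    have hA1'nn : (0:ℝ) ≤ μx*(1/2*‖a'-xs‖^2) := by positivity
    have hB1'nn : (0:ℝ) ≤ μy*(1/2*‖b'-ys‖^2) := by positivity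
    have hLxlam : Lx/lam ≤ rx*μx := by
      rw [hLxeq, div_le_iff₀ hlam0]
      linarith only [mul_le_mul_of_nonneg_right (mul_le_mul_of_nonneg_right hrxlam hrx0) hμx.le]
    have hLylam : Ly/lam ≤ ry*μy := by
      rw [hLyeq, div_le_iff₀ hlam0]
      linarith only [mul_le_mul_of_nonneg_right (mul_le_mul_of_nonneg_right hrylam hry0) hμy.le]
    have bud1 : (μx + cxx*μx + cxy*μx + Lx/lam) * (1/2*‖a-a'‖^2)
        ≤ (lam*μx) * (1/2*‖a-a'‖^2) := by
      apply mul_le_mul_of_nonneg_right _ hA2nn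
      have h5 := mul_le_mul_of_nonneg_right hcoefx hμx.le
      linarith only [hLxlam, h5]
    have bud1y : (μy + cyy*μy + cxy*μy + Ly/lam) * (1/2*‖b-b'‖^2)
        ≤ (lam*μy) * (1/2*‖b-b'‖^2) := by
      apply mul_le_mul_of_nonneg_right _ hB2nn
      have h5 := mul_le_mul_of_nonneg_right hcoefy hμy.le
      linarith only [hLylam, h5]
    have bud2 : (μx + rx*μx + cxx*μx + cxy*μx) * (1/2*‖a'-a2‖^2)
        ≤ ((1+lam)*μx) * (1/2*‖a'-a2‖^2) := by
      apply mul_le_mul_of_nonneg_right _ hA3nn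
      have h5 := mul_le_mul_of_nonneg_right hcoefx hμx.le
      linarith only [h5, hμx.le]
    have bud2y : (μy + ry*μy + cyy*μy + cxy*μy) * (1/2*‖b'-b2‖^2)
        ≤ ((1+lam)*μy) * (1/2*‖b'-b2‖^2) := by
      apply mul_le_mul_of_nonneg_right _ hB3nn
      have h5 := mul_le_mul_of_nonneg_right hcoefy hμy.le
      linarith only [h5, hμy.le]
    have bud3 : (rx + 1) * (f p - f p' - ⟪f' p', p - p'⟫)
        ≤ lam * (f p - f p' - ⟪f' p', p - p'⟫) := by
      apply mul_le_mul_of_nonneg_right _ hDf0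
      rw [hlam]; linarith only [hry0, hcxx0, hcxy0, hcyy0]
    have bud3y : (ry + 1) * (g q - g q' - ⟪g' q', q - q'⟫)
        ≤ lam * (g q - g q' - ⟪g' q', q - q'⟫) := by
      apply mul_le_mul_of_nonneg_right _ hDg0
      rw [hlam]; linarith only [hrx0, hcxx0, hcxy0, hcyy0, hry0]
    -- staged assembly
    have mx : (1+lam)*(μx*(1/2*‖a2-xs‖^2) + breg f f' xs p2)
        = lam*(μx*(1/2*‖a-xs‖^2) + breg f f' xs p)
          - μx*(1/2*‖a'-xs‖^2) - ((1+lam)*μx)*(1/2*‖a'-a2‖^2) - (lam*μx)*(1/2*‖a-a'‖^2)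
          - ⟪hx (a',b') - hx (xs,ys), a'-xs⟫
          + ⟪(μx • a' + f' p' + hx (a', b')) - (μx • a + f' p + hx (a, b)), a' - a2⟫
          + (1+lam)*(f p2 - f p' - ⟪f' p', p2 - p'⟫) - lam*(f p - f p' - ⟪f' p', p - p'⟫)
          - (f xs - f p' - ⟪f' p', xs - p'⟫) := by
      linarith only [S1, S2, S3, S4]
    have my : (1+lam)*(μy*(1/2*‖b2-ys‖^2) + breg g g' ys q2)
        = lam*(μy*(1/2*‖b-ys‖^2) + breg g g' ys q)
          - μy*(1/2*‖b'-ys‖^2) - ((1+lam)*μy)*(1/2*‖b'-b2‖^2) - (lam*μy)*(1/2*‖b-b'‖^2)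
          + ⟪hy (a',b') - hy (xs,ys), b'-ys⟫
          + ⟪(μy • b' + g' q' - hy (a', b')) - (μy • b + g' q - hy (a, b)), b' - b2⟫
          + (1+lam)*(g q2 - g q' - ⟪g' q', q2 - q'⟫) - lam*(g q - g q' - ⟪g' q', q - q'⟫)
          - (g ys - g q' - ⟪g' q', ys - q'⟫) := by
      linarith only [S1y, S2y, S3y, S4y]
    have ex : ⟪(μx • a' + f' p' + hx (a', b')) - (μx • a + f' p + hx (a, b)), a' - a2⟫
        ≤ (μx*(1/2*‖a-a'‖^2) + μx*(1/2*‖a'-a2‖^2))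
          + (rx*(f p - f p' - ⟪f' p', p - p'⟫) + rx*μx*(1/2*‖a'-a2‖^2))
          + (cxx*μx*(1/2*‖a-a'‖^2) + cxx*μx*(1/2*‖a'-a2‖^2))
          + (cxy*(μy*(1/2*‖b-b'‖^2)) + cxy*(μx*(1/2*‖a'-a2‖^2))) := by
      linarith only [hT3, hy1, hy2, hy3, hy4]
    have ey : ⟪(μy • b' + g' q' - hy (a', b')) - (μy • b + g' q - hy (a, b)), b' - b2⟫
        ≤ (μy*(1/2*‖b-b'‖^2) + μy*(1/2*‖b'-b2‖^2))
          + (ry*(g q - g q' - ⟪g' q', q - q'⟫) + ry*μy*(1/2*‖b'-b2‖^2))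
          + (cyy*μy*(1/2*‖b-b'‖^2) + cyy*μy*(1/2*‖b'-b2‖^2))
          + (cxy*(μx*(1/2*‖a-a'‖^2)) + cxy*(μy*(1/2*‖b'-b2‖^2))) := by
      linarith only [hT3y, hy1y, hy2y, hy3y, hy4y]
    have finx : (1+lam)*(μx*(1/2*‖a2-xs‖^2) + breg f f' xs p2)
        ≤ lam*(μx*(1/2*‖a-xs‖^2) + breg f f' xs p)
          - ⟪hx (a',b') - hx (xs,ys), a'-xs⟫
          + cxy*(μy*(1/2*‖b-b'‖^2)) - cxy*(μx*(1/2*‖a-a'‖^2)) := by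
      linarith only [mx, ex, S5, bud1, bud2, bud3, hDxs0, hA1'nn]
    have finy : (1+lam)*(μy*(1/2*‖b2-ys‖^2) + breg g g' ys q2)
        ≤ lam*(μy*(1/2*‖b-ys‖^2) + breg g g' ys q)
          + ⟪hy (a',b') - hy (xs,ys), b'-ys⟫
          + cxy*(μx*(1/2*‖a-a'‖^2)) - cxy*(μy*(1/2*‖b-b'‖^2)) := by
      linarith only [my, ey, S5y, bud1y, bud2y, bud3y, hDys0, hB1'nn]
    linarith only [finx, finy, hHxy]
  -- conclude by induction
  have hPnn : ∀ t, 0 ≤ P t := by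
    intro t
    simp only [hP]
    have h1 := breg_nonneg f f' hfconv hfd xs (zf t)
    have h2 := breg_nonneg g g' hgconv hgd ys (zg t)
    have h3 : (0:ℝ) ≤ μx * (1/2 * ‖zx t - xs‖ ^ 2) := by positivity
    have h4 : (0:ℝ) ≤ μy * (1/2 * ‖zy t - ys‖ ^ 2) := by positivity
    linarith only [h1, h2, h3, h4]
  have main : ∀ t : ℕ, P t ≤ (lam / (1 + lam)) ^ t * P 0 := by
    intro t
    induction t with
    | zero => simp
    | succ n ih =>
      have hstep := key n
      have hρ : (0:ℝ) ≤ lam / (1 + lam) := by positivity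
      calc P (n+1) ≤ (lam / (1 + lam)) * P n := by
            rw [div_mul_eq_mul_div, le_div_iff₀ h1lam]
            linarith only [hstep]
        _ ≤ (lam / (1 + lam)) * ((lam / (1 + lam)) ^ n * P 0) :=
            mul_le_mul_of_nonneg_left ih hρ
        _ = (lam / (1 + lam)) ^ (n+1) * P 0 := by ring
  exact main
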